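/- (Invariance of a top exterior vector under so(p,q).) Let V be a finite-dimensional real vector space with finrank ℝ V = n, let B : V →ₗ[ℝ] V →ₗ[ℝ] ℝ be a symmetric nondegenerate bilinear form, and let f : V →ₗ[ℝ] V satisfy B (f x) y = −B x (f y) for all x, y ∈ V (f is B-skew-adjoint). Then for every family v : Fin n → V one has ∑_{i : Fin n} (v 0 ∧ ⋯ ∧ f(v i) ∧ ⋯ ∧ v (n−1)) = 0 in ⋀ⁿ V. -/

import Mathlib

open Module

/-- The wedge `v 0 ∧ ⋯ ∧ v (n−1)` of a family of vectors, as an element of the `n`-th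
exterior power `⋀[R]^n M` (the analogue of `exteriorPower.ιMulti`). -/
noncomputable def wedgeι (R : Type*) [CommRing R] (n : ℕ) {M : Type*} [AddCommGroup M]
    [Module R M] (v : Fin n → M) : ⋀[R]^n M :=
  ⟨ExteriorAlgebra.ιMulti R n v, ExteriorAlgebra.ιMulti_range R n (Set.mem_range_self v)⟩

private lemma ite_comp_eq_update {V : Type*} [AddCommGroup V] [Module ℝ V]
    {n : ℕ} (f : V →ₗ[ℝ] V) (v : Fin n → V) (i : Fin n) :
    (fun j => (if j = i then f else (LinearMap.id : V →ₗ[ℝ] V)) (v j))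
      = Function.update v i (f (v i)) := by
  funext j
  rcases eq_or_ne j i with rfl | h
  · simp
  · simp [h, Function.update_of_ne h]

/-- The alternating map `v ↦ ∑ i, ιMulti (update v i (f (v i)))`. -/
noncomputable def sumUpdateAlt {V : Type*} [AddCommGroup V] [Module ℝ V]
    (n : ℕ) (f : V →ₗ[ℝ] V) : V [⋀^Fin n]→ₗ[ℝ] ExteriorAlgebra ℝ V where
  toMultilinearMap :=
    ∑ i : Fin n, (ExteriorAlgebra.ιMulti ℝ n).toMultilinearMap.compLinearMap
      (fun j => if j = i then f else LinearMap.id)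
  map_eq_zero_of_eq' := by
    intro v a b hv hab
    have hterm : ∀ i : Fin n, i ≠ a → i ≠ b →
        ExteriorAlgebra.ιMulti ℝ n (Function.update v i (f (v i))) = 0 := by
      intro i hia hib
      exact (ExteriorAlgebra.ιMulti ℝ n).map_eq_zero_of_eq _
        (by rw [Function.update_of_ne (Ne.symm hia), Function.update_of_ne (Ne.symm hib), hv]) hab
    have happ : (∑ i : Fin n, (ExteriorAlgebra.ιMulti ℝ n).toMultilinearMap.compLinearMap
        (fun j => if j = i then f else LinearMap.id)) v
        = ∑ i : Fin n, ExteriorAlgebra.ιMulti ℝ n (Function.update v i (f (v i))) := by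
      rw [MultilinearMap.sum_apply]
      exact Finset.sum_congr rfl fun i _ => by
        rw [MultilinearMap.compLinearMap_apply, ite_comp_eq_update]
        rfl
    rw [MultilinearMap.toFun_eq_coe, happ]
    have hsub : (∑ i : Fin n, ExteriorAlgebra.ιMulti ℝ n (Function.update v i (f (v i))))
        = ∑ i ∈ ({a, b} : Finset (Fin n)),
            ExteriorAlgebra.ιMulti ℝ n (Function.update v i (f (v i))) := by
      refine (Finset.sum_subset (Finset.subset_univ _) fun i _ hi => ?_).symm
      simp only [Finset.mem_insert, Finset.mem_singleton, not_or] at hi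
      exact hterm i hi.1 hi.2
    rw [hsub, Finset.sum_pair hab]
    have hswap : Function.update v a (f (v a))
        = (Function.update v b (f (v b))) ∘ Equiv.swap a b := by
      funext j
      simp only [Function.comp_apply]
      rcases eq_or_ne j a with rfl | hja
      · rw [Equiv.swap_apply_left, Function.update_self, Function.update_self, hv]
      rcases eq_or_ne j b with rfl | hjb
      · rw [Equiv.swap_apply_right, Function.update_of_ne (Ne.symm hab),
          Function.update_of_ne hab]
        exact hv.symm
      · rw [Equiv.swap_apply_of_ne_of_ne hja hjb, Function.update_of_ne hja,
          Function.update_of_ne hjb]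
    rw [hswap, (ExteriorAlgebra.ιMulti ℝ n (M := V)).map_swap _ hab]
    exact neg_add_cancel _

theorem sum_wedge_update_skewAdjoint_eq_zero (V : Type*) [AddCommGroup V] [Module ℝ V]
    [FiniteDimensional ℝ V] (n : ℕ) (hn : finrank ℝ V = n)
    (B : V →ₗ[ℝ] V →ₗ[ℝ] ℝ) (hsymm : ∀ x y, B x y = B y x)
    (hnd : ∀ x, (∀ y, B x y = 0) → x = 0)
    (f : V →ₗ[ℝ] V) (hskew : ∀ x y, B (f x) y = -(B x (f y)))
    (v : Fin n → V) :
    (∑ i : Fin n, wedgeι ℝ n (Function.update v i (f (v i)))) = 0 := by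
  classical
  -- reduce to the exterior algebra
  rw [Subtype.ext_iff]
  have hval : ((∑ i : Fin n, wedgeι ℝ n (Function.update v i (f (v i))) : ⋀[ℝ]^n V) :
      ExteriorAlgebra ℝ V)
      = ∑ i : Fin n, ExteriorAlgebra.ιMulti ℝ n (Function.update v i (f (v i))) := by
    simp [wedgeι]
  rw [hval]
  -- identify with the alternating map
  have hD : ∀ w : Fin n → V, sumUpdateAlt n f w
      = ∑ i : Fin n, ExteriorAlgebra.ιMulti ℝ n (Function.update w i (f (w i))) := by
    intro w
    show (∑ i : Fin n, (ExteriorAlgebra.ιMulti ℝ n).toMultilinearMap.compLinearMap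
      (fun j => if j = i then f else LinearMap.id)) w = _
    rw [MultilinearMap.sum_apply]
    exact Finset.sum_congr rfl fun i _ => by
      rw [MultilinearMap.compLinearMap_apply, ite_comp_eq_update]; rfl
  rw [← hD]
  -- get an orthogonal basis
  have hBsymm : B.IsSymm := ⟨fun x y => hsymm x y⟩
  obtain ⟨e', he'⟩ := LinearMap.BilinForm.exists_orthogonal_basis hBsymm
  set e : Basis (Fin n) ℝ V := e'.reindex (finCongr hn) with he_def
  have horth : ∀ i j : Fin n, i ≠ j → B (e i) (e j) = 0 := by
    intro i j hij
    rw [he_def, Basis.reindex_apply, Basis.reindex_apply]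
    exact he' (fun h => hij ((finCongr hn).symm.injective h))
  have hBe : ∀ i : Fin n, B (e i) (e i) ≠ 0 := by
    intro i h0
    have : e i = 0 := by
      apply hnd
      intro y
      rw [← e.sum_repr y, map_sum]
      refine Finset.sum_eq_zero fun j _ => ?_
      rw [map_smul]
      rcases eq_or_ne i j with rfl | hij
      · simp [h0]
      · simp [horth i j hij]
    exact e.ne_zero i this
  -- diagonal coefficients of f in this basis vanish
  have hdiag : ∀ i : Fin n, e.repr (f (e i)) i = 0 := by
    intro i
    have h1 : B (f (e i)) (e i) = 0 := by
      have := hskew (e i) (e i)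
      have h2 := hsymm (e i) (f (e i))
      linarith
    have h3 : B (f (e i)) (e i) = e.repr (f (e i)) i * B (e i) (e i) := by
      conv_lhs => rw [← e.sum_repr (f (e i))]
      rw [map_sum, LinearMap.sum_apply]
      rw [Finset.sum_eq_single i]
      · rw [map_smul]; rfl
      · intro j _ hji
        rw [map_smul]
        simp [hsymm (e j) (e i) ▸ horth j i hji, horth j i hji]
      · intro h; exact absurd (Finset.mem_univ i) h
    rw [h1] at h3
    exact (mul_eq_zero.mp h3.symm).resolve_right (hBe i)
  -- value of the alternating map on the basis vanishes
  have hDe : sumUpdateAlt n f e = 0 := by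
    rw [hD]
    refine Finset.sum_eq_zero fun i _ => ?_
    have hexp : f (e i) = ∑ j : Fin n, e.repr (f (e i)) j • e j := (e.sum_repr (f (e i))).symm
    rw [hexp, AlternatingMap.map_update_sum]
    refine Finset.sum_eq_zero fun j _ => ?_
    rw [AlternatingMap.map_update_smul]
    rcases eq_or_ne j i with rfl | hji
    · rw [hdiag j, zero_smul]
    · rw [(ExteriorAlgebra.ιMulti ℝ n).map_eq_zero_of_eq
        (Function.update (⇑e) i (e j)) (i := i) (j := j) (by
          rw [Function.update_self, Function.update_of_ne hji]) (Ne.symm hji), smul_zero]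
  -- conclude by `Basis.ext_alternating`
  have hzero : sumUpdateAlt n f = (0 : V [⋀^Fin n]→ₗ[ℝ] ExteriorAlgebra ℝ V) := by
    refine Basis.ext_alternating e fun u hu => ?_
    have hbij : Function.Bijective u := (Finite.injective_iff_bijective).mp hu
    set σ : Equiv.Perm (Fin n) := Equiv.ofBijective u hbij with hσ
    have : (fun i => e (u i)) = (⇑e) ∘ σ := rfl
    rw [this, AlternatingMap.map_perm, hDe, smul_zero]
    simp
  rw [hzero]
  simp
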